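/- For a ≥ b and each j with 1 ≤ j ≤ b, the map E : E†^j H^S_{a+j,b−j} → E†^{j−1} H^S_{a+j,b−j} is a linear isomorphism, with inverse (1/(j(a−b+j+1)))·E†. -/

import Mathlib

open MvPolynomial

noncomputable section

/-- Index type for the variables `z_1,…,z_{2p}, z̄_1,…,z̄_{2p}` on `ℝ^{4p}`:
the pair `(k, i) : Fin p × Fin 2` encodes the variable with index `2k+1` (for `i = 0`)
or `2k+2` (for `i = 1`); `Sum.inl` gives a `z`-variable, `Sum.inr` a `z̄`-variable. -/
abbrev QIdx (p : ℕ) := (Fin p × Fin 2) ⊕ (Fin p × Fin 2)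

/-- Complex polynomials in the `4p` commuting variables `z_j, z̄_j`, `j = 1,…,2p`. -/
abbrev QPoly (p : ℕ) := MvPolynomial (QIdx p) ℂ

/-- The variable `z_j`. -/
def qz (p : ℕ) (j : Fin p × Fin 2) : QPoly p := X (Sum.inl j)

/-- The variable `z̄_j`. -/
def qzb (p : ℕ) (j : Fin p × Fin 2) : QPoly p := X (Sum.inr j)

/-- Multiplication by `z_j`. -/
def qmz (p : ℕ) (j : Fin p × Fin 2) : Module.End ℂ (QPoly p) := LinearMap.mulLeft ℂ (qz p j)

/-- Multiplication by `z̄_j`. -/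
def qmzb (p : ℕ) (j : Fin p × Fin 2) : Module.End ℂ (QPoly p) := LinearMap.mulLeft ℂ (qzb p j)

/-- `∂_{z_j}`. -/
def qdz (p : ℕ) (j : Fin p × Fin 2) : Module.End ℂ (QPoly p) := (pderiv (Sum.inl j)).toLinearMap

/-- `∂_{z̄_j}`. -/
def qdzb (p : ℕ) (j : Fin p × Fin 2) : Module.End ℂ (QPoly p) := (pderiv (Sum.inr j)).toLinearMap

/-- The Laplace operator `Δ_{4p} = 4 Σ_{j=1}^{2p} ∂_{z_j} ∂_{z̄_j}`. -/
def qlap (p : ℕ) : Module.End ℂ (QPoly p) := (4 : ℂ) • ∑ j : Fin p × Fin 2, qdz p j * qdzb p j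

/-- `r² = Σ_{j=1}^{2p} z_j z̄_j`. -/
def qr2 (p : ℕ) : QPoly p := ∑ j : Fin p × Fin 2, qz p j * qzb p j

/-- The symplectic ladder operator `E = Σ_{k=1}^p (z_{2k-1} ∂_{z̄_{2k}} − z_{2k} ∂_{z̄_{2k-1}})`. -/
def opE (p : ℕ) : Module.End ℂ (QPoly p) :=
  ∑ k : Fin p, (qmz p (k, 0) * qdzb p (k, 1) - qmz p (k, 1) * qdzb p (k, 0))

/-- The symplectic ladder operator
`E† = −Σ_{k=1}^p (z̄_{2k-1} ∂_{z_{2k}} − z̄_{2k} ∂_{z_{2k-1}})`. -/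
def opEd (p : ℕ) : Module.End ℂ (QPoly p) :=
  - ∑ k : Fin p, (qmzb p (k, 0) * qdz p (k, 1) - qmzb p (k, 1) * qdz p (k, 0))

/-- Weight recording the degree in the `z`-variables. -/
def qwz (p : ℕ) : QIdx p → ℕ := Sum.elim (fun _ => 1) (fun _ => 0)

/-- Weight recording the degree in the `z̄`-variables. -/
def qwzb (p : ℕ) : QIdx p → ℕ := Sum.elim (fun _ => 0) (fun _ => 1)

/-- `P_{a,b}`: polynomials of bidegree `(a,b)`, i.e. `a`-homogeneous in the `z_j` and
`b`-homogeneous in the `z̄_j`. -/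
def qPab (p a b : ℕ) : Submodule ℂ (QPoly p) :=
  weightedHomogeneousSubmodule ℂ (qwz p) a ⊓ weightedHomogeneousSubmodule ℂ (qwzb p) b

/-- `H_{a,b}`: harmonic polynomials of bidegree `(a,b)`. -/
def qHab (p a b : ℕ) : Submodule ℂ (QPoly p) := qPab p a b ⊓ LinearMap.ker (qlap p)

/-- `H^S_{a,b} = H_{a,b} ∩ Ker E`: symplectic harmonics of bidegree `(a,b)`. -/
def qHS (p a b : ℕ) : Submodule ℂ (QPoly p) := qHab p a b ⊓ LinearMap.ker (opE p)

/-- `H^{S†}_{a,b} = H_{a,b} ∩ Ker E†`: adjoint symplectic harmonics of bidegree `(a,b)`. -/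
def qHSd (p a b : ℕ) : Submodule ℂ (QPoly p) := qHab p a b ⊓ LinearMap.ker (opEd p)

namespace SympAux

variable {p : ℕ}

/-- elementary symplectic pieces -/
def eA (k : Fin p) : Module.End ℂ (QPoly p) :=
  qmz p (k, 0) * qdzb p (k, 1) - qmz p (k, 1) * qdzb p (k, 0)

def eB (k : Fin p) : Module.End ℂ (QPoly p) :=
  qmzb p (k, 0) * qdz p (k, 1) - qmzb p (k, 1) * qdz p (k, 0)

lemma opE_apply (f : QPoly p) : opE p f = ∑ k : Fin p, eA k f := by
  rw [opE]; simp [eA]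

lemma opEd_apply (f : QPoly p) : opEd p f = -∑ k : Fin p, eB k f := by
  rw [opEd]; simp [eB]

lemma eA_apply (k : Fin p) (f : QPoly p) :
    eA k f = X (Sum.inl (k, 0)) * pderiv (Sum.inr (k, 1)) f
      - X (Sum.inl (k, 1)) * pderiv (Sum.inr (k, 0)) f := by
  simp [eA, qmz, qdzb, qz, qzb, LinearMap.mulLeft_apply]

lemma eB_apply (k : Fin p) (f : QPoly p) :
    eB k f = X (Sum.inr (k, 0)) * pderiv (Sum.inl (k, 1)) f
      - X (Sum.inr (k, 1)) * pderiv (Sum.inl (k, 0)) f := by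
  simp [eB, qmzb, qdz, qz, qzb, LinearMap.mulLeft_apply]

lemma pderiv_pderiv_comm' (i j : QIdx p) (f : QPoly p) :
    pderiv i (pderiv j f) = pderiv j (pderiv i f) := by
  induction f using MvPolynomial.induction_on' with
  | add f g hf hg => simp [hf, hg]
  | monomial d c =>
    rcases eq_or_ne i j with rfl | hij
    · rfl
    · simp only [pderiv_monomial]
      rw [Finsupp.tsub_apply, Finsupp.tsub_apply, Finsupp.single_eq_of_ne hij,
        Finsupp.single_eq_of_ne (Ne.symm hij), tsub_zero, tsub_zero, tsub_right_comm]
      ring_nf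

lemma cross (k l : Fin p) (h : k ≠ l) (f : QPoly p) :
    eA k (eB l f) = eB l (eA k f) := by
  simp only [eA_apply, eB_apply]
  simp [pderiv_mul, pderiv_X_of_ne, h, h.symm, pderiv_pderiv_comm' (Sum.inr _)]
  ring

lemma same (k : Fin p) (f : QPoly p) :
    eB k (eA k f) - eA k (eB k f) =
      (X (Sum.inl (k, 0)) * pderiv (Sum.inl (k, 0)) f
        + X (Sum.inl (k, 1)) * pderiv (Sum.inl (k, 1)) f)
      - (X (Sum.inr (k, 0)) * pderiv (Sum.inr (k, 0)) f
        + X (Sum.inr (k, 1)) * pderiv (Sum.inr (k, 1)) f) := by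
  simp only [eA_apply, eB_apply]
  simp [pderiv_mul, pderiv_X_of_ne, pderiv_pderiv_comm' (Sum.inr _)]
  ring

lemma commEEd (f : QPoly p) :
    opE p (opEd p f) - opEd p (opE p f)
      = (∑ i : QIdx p, (qwz p i : ℂ) • (X i * pderiv i f))
        - ∑ i : QIdx p, (qwzb p i : ℂ) • (X i * pderiv i f) := by
  have h1 : opE p (opEd p f) = -∑ k : Fin p, ∑ l : Fin p, eA k (eB l f) := by
    rw [opEd_apply, opE_apply]
    simp only [map_neg, map_sum, Finset.sum_neg_distrib]
  have h2 : opEd p (opE p f) = -∑ k : Fin p, ∑ l : Fin p, eB l (eA k f) := by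
    rw [opE_apply, opEd_apply]
    simp only [map_sum]
    rw [Finset.sum_comm]
  rw [h1, h2, neg_sub_neg, ← Finset.sum_sub_distrib]
  have h3 : ∀ k : Fin p,
      ((∑ l : Fin p, eB l (eA k f)) - ∑ l : Fin p, eA k (eB l f))
        = (X (Sum.inl (k, 0)) * pderiv (Sum.inl (k, 0)) f
            + X (Sum.inl (k, 1)) * pderiv (Sum.inl (k, 1)) f)
          - (X (Sum.inr (k, 0)) * pderiv (Sum.inr (k, 0)) f
            + X (Sum.inr (k, 1)) * pderiv (Sum.inr (k, 1)) f) := by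
    intro k
    rw [← Finset.sum_sub_distrib, Finset.sum_eq_single k]
    · exact same k f
    · intro l _ hlk
      rw [sub_eq_zero, ← cross k l (Ne.symm hlk)]
    · intro h; exact absurd (Finset.mem_univ k) h
  rw [Finset.sum_congr rfl fun k _ => h3 k, Finset.sum_sub_distrib]
  congr 1
  · simp [qwz, Fintype.sum_sum_type, Fintype.sum_prod_type, Fin.sum_univ_two]
  · simp [qwzb, Fintype.sum_sum_type, Fintype.sum_prod_type, Fin.sum_univ_two]

lemma weight_single_one (w : QIdx p → ℕ) (i : QIdx p) :
    Finsupp.weight w (Finsupp.single i 1) = w i := by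
  rw [Finsupp.weight_apply, Finsupp.sum_single_index] <;> simp

lemma pderiv_mem {w : QIdx p → ℕ} {n : ℕ} {f : QPoly p} (i : QIdx p)
    (hf : f ∈ weightedHomogeneousSubmodule ℂ w n) :
    pderiv i f ∈ weightedHomogeneousSubmodule ℂ w (n - w i) := by
  rw [f.as_sum, map_sum]
  refine Submodule.sum_mem _ fun d hd => ?_
  rw [pderiv_monomial]
  rcases Nat.eq_zero_or_pos (d i) with h0 | h1
  · simp [h0]
  · refine isWeightedHomogeneous_monomial _ _ _ ?_
    have hle : Finsupp.single i 1 ≤ d := by rwa [Finsupp.single_le_iff]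
    have hsum : (d - Finsupp.single i 1) + Finsupp.single i 1 = d :=
      tsub_add_cancel_of_le hle
    have hw : Finsupp.weight w d = n := hf (mem_support_iff.mp hd)
    have h2 := congrArg (Finsupp.weight w) hsum
    rw [map_add, hw, weight_single_one] at h2
    omega

lemma X_mul_pderiv_monomial (i : QIdx p) (d : QIdx p →₀ ℕ) (c : ℂ) :
    X i * pderiv i (monomial d c) = (d i : ℂ) • monomial d c := by
  rw [pderiv_monomial]
  rcases Nat.eq_zero_or_pos (d i) with h0 | h1
  · simp [h0]
  · have hle : Finsupp.single i 1 ≤ d := by rwa [Finsupp.single_le_iff]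
    rw [X, monomial_mul, one_mul, add_comm, tsub_add_cancel_of_le hle, smul_monomial,
      smul_eq_mul, mul_comm]

lemma euler {w : QIdx p → ℕ} {n : ℕ} {f : QPoly p}
    (hf : f ∈ weightedHomogeneousSubmodule ℂ w n) :
    ∑ i : QIdx p, (w i : ℂ) • (X i * pderiv i f) = (n : ℂ) • f := by
  have hstep : ∀ i : QIdx p, (w i : ℂ) • (X i * pderiv i f)
      = ∑ d ∈ f.support, ((w i * d i : ℕ) : ℂ) • monomial d (coeff d f) := by
    intro i
    conv_lhs => rw [f.as_sum]
    rw [map_sum, Finset.mul_sum, Finset.smul_sum]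
    refine Finset.sum_congr rfl fun d hd => ?_
    rw [X_mul_pderiv_monomial, smul_smul]
    push_cast; ring_nf
  calc ∑ i : QIdx p, (w i : ℂ) • (X i * pderiv i f)
      = ∑ i : QIdx p, ∑ d ∈ f.support, ((w i * d i : ℕ) : ℂ) • monomial d (coeff d f) :=
        Finset.sum_congr rfl fun i _ => hstep i
    _ = ∑ d ∈ f.support, ∑ i : QIdx p, ((w i * d i : ℕ) : ℂ) • monomial d (coeff d f) :=
        Finset.sum_comm
    _ = ∑ d ∈ f.support, (n : ℂ) • monomial d (coeff d f) := by
        refine Finset.sum_congr rfl fun d hd => ?_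
        rw [← Finset.sum_smul]
        congr 1
        have hw : (Finsupp.weight w d : ℕ) = n := hf (mem_support_iff.mp hd)
        rw [← hw, Finsupp.weight_apply, Finsupp.sum_fintype]
        · rw [Nat.cast_sum]
          exact Finset.sum_congr rfl fun i _ => by rw [smul_eq_mul]; push_cast; ring
        · intro; simp
    _ = (n : ℂ) • f := by rw [← Finset.smul_sum, ← f.as_sum]

lemma opEd_mem {α β : ℕ} {f : QPoly p} (hf : f ∈ qPab p α β) : opEd p f ∈ qPab p (α - 1) (β + 1) := by
  obtain ⟨h1, h2⟩ := Submodule.mem_inf.mp hf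
  have t1 : ∀ (u v : Fin p × Fin 2),
      X (Sum.inr u) * pderiv (Sum.inl v) f ∈ weightedHomogeneousSubmodule ℂ (qwz p) (α - 1) := by
    intro u v
    have := (isWeightedHomogeneous_X ℂ (qwz p) (Sum.inr u)).mul (pderiv_mem (Sum.inl v) h1)
    simpa [qwz] using this
  have t2 : ∀ (u v : Fin p × Fin 2),
      X (Sum.inr u) * pderiv (Sum.inl v) f ∈ weightedHomogeneousSubmodule ℂ (qwzb p) (β + 1) := by
    intro u v
    have := (isWeightedHomogeneous_X ℂ (qwzb p) (Sum.inr u)).mul (pderiv_mem (Sum.inl v) h2)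
    simpa [qwzb, Nat.add_comm] using this
  refine Submodule.mem_inf.mpr ⟨?_, ?_⟩ <;>
    rw [opEd_apply]
  · refine neg_mem (Submodule.sum_mem _ fun k _ => ?_)
    rw [eB_apply]
    exact sub_mem (t1 _ _) (t1 _ _)
  · refine neg_mem (Submodule.sum_mem _ fun k _ => ?_)
    rw [eB_apply]
    exact sub_mem (t2 _ _) (t2 _ _)

lemma opEd_pow_mem (i : ℕ) {α β : ℕ} {f : QPoly p} (hf : f ∈ qPab p α β) :
    (opEd p ^ i) f ∈ qPab p (α - i) (β + i) := by
  induction i with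
  | zero => simpa using hf
  | succ n ih =>
    have : (opEd p ^ (n+1)) f = opEd p ((opEd p ^ n) f) := by
      rw [pow_succ', Module.End.mul_apply]
    rw [this]
    have := opEd_mem ih
    convert this using 2 <;> omega

lemma euler_bi {α β : ℕ} {f : QPoly p} (hf : f ∈ qPab p α β) :
    opE p (opEd p f) = opEd p (opE p f) + ((α : ℂ) - (β : ℂ)) • f := by
  obtain ⟨h1, h2⟩ := Submodule.mem_inf.mp hf
  have h := commEEd f
  rw [euler h1, euler h2] at h
  rw [sub_smul, ← h]
  ring

lemma key {α β : ℕ} {h : QPoly p} (hh : h ∈ qPab p α β) (he : opE p h = 0) :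
    ∀ j : ℕ, j + 1 ≤ α →
      opE p ((opEd p ^ (j+1)) h) = (((j:ℂ)+1) * ((α:ℂ) - (β:ℂ) - (j:ℂ))) • (opEd p ^ j) h := by
  intro j
  induction j with
  | zero =>
    intro _
    rw [pow_one]
    rw [euler_bi hh, he, map_zero, zero_add]
    simp
  | succ i ih =>
    intro hα
    have hi : i + 1 ≤ α := by omega
    have hmem : (opEd p ^ (i+1)) h ∈ qPab p (α - (i+1)) (β + (i+1)) := opEd_pow_mem _ hh
    have hstep : opE p ((opEd p ^ (i+2)) h)
        = opEd p (opE p ((opEd p ^ (i+1)) h))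
          + (((α - (i+1) : ℕ) : ℂ) - ((β + (i+1) : ℕ) : ℂ)) • (opEd p ^ (i+1)) h := by
      rw [show (opEd p ^ (i+2)) h = opEd p ((opEd p ^ (i+1)) h) from by
        rw [pow_succ', Module.End.mul_apply]]
      exact euler_bi hmem
    rw [hstep, ih hi, map_smul]
    rw [show opEd p ((opEd p ^ i) h) = (opEd p ^ (i+1)) h from by
      rw [pow_succ', Module.End.mul_apply]]
    rw [← add_smul]
    congr 1
    push_cast [Nat.cast_sub (show i + 1 ≤ α by omega)]
    ring

end SympAux

open SympAux

/-- For `a ≥ b` and `1 ≤ j ≤ b`, the map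
`E : E†^j H^S_{a+j,b−j} → E†^{j−1} H^S_{a+j,b−j}` is a linear isomorphism, with inverse
`(1/(j(a−b+j+1))) E†`. -/
theorem stmt_14 (p a b j : ℕ) (hab : b ≤ a) (hj : 1 ≤ j) (hjb : j ≤ b) :
    let W : Submodule ℂ (QPoly p) :=
      Submodule.map ((opEd p) ^ j) (qHS p (a + j) (b - j))
    let W' : Submodule ℂ (QPoly p) :=
      Submodule.map ((opEd p) ^ (j - 1)) (qHS p (a + j) (b - j))
    let c : ℂ := (j : ℂ) * ((a : ℂ) - (b : ℂ) + (j : ℂ) + 1)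
    Submodule.map (opE p) W = W' ∧
    (∀ f ∈ W, opE p f = 0 → f = 0) ∧
    (∀ f ∈ W, c⁻¹ • opEd p (opE p f) = f) ∧
    (∀ g ∈ W', opE p (c⁻¹ • opEd p g) = g) := by
  obtain ⟨i, rfl⟩ : ∃ i, j = i + 1 := ⟨j - 1, by omega⟩
  intro W W' c
  have hW : W = Submodule.map ((opEd p) ^ (i+1)) (qHS p (a + (i+1)) (b - (i+1))) := rfl
  have hW' : W' = Submodule.map ((opEd p) ^ i) (qHS p (a + (i+1)) (b - (i+1))) := by
    show Submodule.map ((opEd p) ^ (i + 1 - 1)) _ = _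
    norm_num
  have hcdef : c = ((i+1 : ℕ) : ℂ) * ((a : ℂ) - (b : ℂ) + ((i+1 : ℕ) : ℂ) + 1) := rfl
  have hc2 : c = (((i+1) * ((a - b) + i + 2) : ℕ) : ℂ) := by
    rw [hcdef]; push_cast [Nat.cast_sub hab]; ring
  have hcne : c ≠ 0 := by
    rw [hc2]
    exact Nat.cast_ne_zero.mpr (by positivity)
  -- the key computation
  have key' : ∀ h ∈ qHS p (a + (i+1)) (b - (i+1)),
      opE p (((opEd p) ^ (i+1)) h) = c • ((opEd p) ^ i) h := by
    intro h hh
    obtain ⟨h1, h2⟩ := Submodule.mem_inf.mp hh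
    obtain ⟨h11, _⟩ := Submodule.mem_inf.mp h1
    have he : opE p h = 0 := LinearMap.mem_ker.mp h2
    have hk := key h11 he i (by omega)
    rw [hk]
    congr 1
    rw [hc2]
    push_cast [Nat.cast_sub (show i + 1 ≤ b by omega), Nat.cast_sub hab]
    ring
  have hsucc : ∀ h : QPoly p, opEd p (((opEd p) ^ i) h) = ((opEd p) ^ (i+1)) h := by
    intro h; rw [pow_succ', Module.End.mul_apply]
  -- part 3
  have p3 : ∀ f ∈ W, c⁻¹ • opEd p (opE p f) = f := by
    rintro f hf
    rw [hW] at hf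
    obtain ⟨h, hh, rfl⟩ := hf
    rw [key' h hh, map_smul, hsucc, smul_smul, inv_mul_cancel₀ hcne, one_smul]
  refine ⟨?_, ?_, p3, ?_⟩
  · -- Submodule.map (opE p) W = W'
    apply le_antisymm
    · rintro g hg
      obtain ⟨f, hf, rfl⟩ := hg
      rw [hW] at hf
      obtain ⟨h, hh, rfl⟩ := hf
      rw [hW']
      rw [key' h hh]
      exact ⟨c • h, Submodule.smul_mem _ _ hh, by rw [map_smul]⟩
    · rintro g hg
      rw [hW'] at hg
      obtain ⟨h, hh, rfl⟩ := hg
      refine ⟨((opEd p) ^ (i+1)) (c⁻¹ • h), ?_, ?_⟩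
      · rw [hW]
        exact ⟨c⁻¹ • h, Submodule.smul_mem _ _ hh, rfl⟩
      · rw [map_smul, map_smul, key' h hh, smul_smul, inv_mul_cancel₀ hcne, one_smul]
  · -- injectivity
    intro f hf hE
    have := p3 f hf
    rw [hE, map_zero, smul_zero] at this
    exact this.symm
  · -- part 4
    rintro g hg
    rw [hW'] at hg
    obtain ⟨h, hh, rfl⟩ := hg
    rw [map_smul, hsucc, key' h hh, smul_smul, inv_mul_cancel₀ hcne, one_smul]
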